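/- Han's inequality: For a random vector (X₁,…,Xₙ) of finitely-valued random variables with n ≥ 2, (n-1)·H(X₁,…,Xₙ) ≤ Σᵢ₌₁ⁿ H(X₁,…,X_{i-1},X_{i+1},…,Xₙ). -/

import Mathlib

open Finset

/-- The probability that the random variable `X` takes value `x`, under the
probability mass function `μ` on the finite sample space `Ω`. -/
noncomputable def prOf {Ω α : Type*} [Fintype Ω] [DecidableEq α]
    (μ : Ω → ℝ) (X : Ω → α) (x : α) : ℝ :=
  ∑ ω ∈ Finset.univ.filter (fun ω => X ω = x), μ ω

/-- The Shannon entropy (base-2) of the random variable `X`. -/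
noncomputable def H2 {Ω α : Type*} [Fintype Ω] [Fintype α] [DecidableEq α]
    (μ : Ω → ℝ) (X : Ω → α) : ℝ :=
  ∑ x : α, -(prOf μ X x * Real.logb 2 (prOf μ X x))

/-- The conditional Shannon entropy `H(X|Y)`. -/
noncomputable def condH2 {Ω α β : Type*} [Fintype Ω] [Fintype α] [Fintype β]
    [DecidableEq α] [DecidableEq β] (μ : Ω → ℝ) (X : Ω → α) (Y : Ω → β) : ℝ :=
  ∑ y : β, prOf μ Y y * ∑ x : α,
    -((prOf μ (fun ω => (X ω, Y ω)) (x, y) / prOf μ Y y) *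
      Real.logb 2 (prOf μ (fun ω => (X ω, Y ω)) (x, y) / prOf μ Y y))

section hanAux

open MeasureTheory
open scoped ENNReal

variable {Ω : Type*} [Fintype Ω]

variable {Ω : Type*} [Fintype Ω]

lemma prOf_nonneg {α : Type*} [DecidableEq α] {μ : Ω → ℝ} (hnn : ∀ ω, 0 ≤ μ ω) (X : Ω → α) (x : α) :
    0 ≤ prOf μ X x :=
  Finset.sum_nonneg fun ω _ => hnn ω

lemma sum_prOf {α : Type*} [Fintype α] [DecidableEq α] (μ : Ω → ℝ) (X : Ω → α) :
    ∑ x : α, prOf μ X x = ∑ ω, μ ω :=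
  Finset.sum_fiberwise _ _ _

lemma prOf_comp {α β : Type*} [Fintype α] [DecidableEq α] [DecidableEq β]
    (μ : Ω → ℝ) (F : Ω → α) (φ : α → β) (b : β) :
    prOf μ (fun ω => φ (F ω)) b = ∑ a ∈ univ.filter (fun a => φ a = b), prOf μ F a := by
  unfold prOf
  calc ∑ ω ∈ univ.filter (fun ω => φ (F ω) = b), μ ω
      = ∑ ω : Ω, if φ (F ω) = b then μ ω else 0 := Finset.sum_filter _ _
    _ = ∑ a : α, ∑ ω ∈ univ.filter (fun ω => F ω = a), (if φ (F ω) = b then μ ω else 0) :=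
        (Finset.sum_fiberwise _ _ _).symm
    _ = ∑ a : α, (if φ a = b then ∑ ω ∈ univ.filter (fun ω => F ω = a), μ ω else 0) := by
        refine Finset.sum_congr rfl fun a _ => ?_
        by_cases h : φ a = b
    -- in true case rewrite inner conditions
        · simp only [h, if_true]
          refine Finset.sum_congr rfl fun ω hω => ?_
          rw [(Finset.mem_filter.1 hω).2, h, if_pos rfl]
        · simp only [h, if_false]
          refine Finset.sum_eq_zero fun ω hω => ?_
          rw [(Finset.mem_filter.1 hω).2, if_neg h]
    _ = ∑ a ∈ univ.filter (fun a => φ a = b), ∑ ω ∈ univ.filter (fun ω => F ω = a), μ ω :=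
        (Finset.sum_filter _ _).symm

lemma fiber_sum_mul {α β : Type*} [Fintype α] [Fintype β] [DecidableEq β]
    (p : α → ℝ) (φ : α → β) (q : β → ℝ)
    (hq : ∀ b, q b = ∑ a ∈ univ.filter (fun a => φ a = b), p a) (L : ℝ → ℝ) :
    ∑ b, -(q b * L (q b)) = ∑ a, -(p a * L (q (φ a))) := by
  calc ∑ b, -(q b * L (q b))
      = ∑ b, ∑ a ∈ univ.filter (fun a => φ a = b), -(p a * L (q (φ a))) := by
        refine Finset.sum_congr rfl fun b _ => ?_
        have h1 : q b * L (q b) = ∑ a ∈ univ.filter (fun a => φ a = b), p a * L (q b) := by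
          rw [← Finset.sum_mul, ← hq b]
        rw [h1, ← Finset.sum_neg_distrib]
        refine Finset.sum_congr rfl fun a ha => ?_
        rw [(Finset.mem_filter.1 ha).2]
    _ = ∑ a, -(p a * L (q (φ a))) := Finset.sum_fiberwise _ _ _



lemma LW {n : ℕ} (hn : 2 ≤ n) {α : Fin n → Type*} [∀ i, Fintype (α i)]
    (p : (∀ i, α i) → ℝ) (hp0 : ∀ x, 0 ≤ p x) (hp1 : ∑ x, p x = 1) :
    ∑ x : ∀ i, α i, ∏ i, (∑ t, p (Function.update x i t)) ^ ((1:ℝ)/((n:ℝ)-1)) ≤ 1 := by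
  classical
  letI : ∀ i, MeasurableSpace (α i) := fun i => ⊤
  haveI : ∀ i, MeasurableSingletonClass (α i) :=
    fun i => ⟨fun a => MeasurableSpace.measurableSet_top⟩
  haveI : MeasurableSingletonClass (∀ i, α i) := ⟨fun x => by
    rw [← Set.univ_pi_singleton]
    exact MeasurableSet.univ_pi fun i => MeasurableSpace.measurableSet_top⟩
  have h1n : (1:ℝ) < n := by exact_mod_cast lt_of_lt_of_le one_lt_two hn
  have hm : (0:ℝ) < (n:ℝ) - 1 := by linarith
  set F : (∀ i, α i) → ℝ≥0∞ := fun x => ENNReal.ofReal (p x) with hF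
  have hconj : Real.HolderConjugate (Fintype.card (Fin n)) ((n:ℝ)/((n:ℝ)-1)) := by
    rw [Fintype.card_fin]
    exact Real.HolderConjugate.conjExponent h1n
  have H := MeasureTheory.lintegral_prod_lintegral_pow_le
    (fun i => (Measure.count : Measure (α i))) hconj (f := F) (measurable_of_countable F)
  -- compute the pi-measure of singletons
  have hpise : ∀ x : ∀ i, α i, (Measure.pi (fun i => (Measure.count : Measure (α i)))) {x} = 1 := by
    intro x
    rw [← Set.univ_pi_singleton, Measure.pi_pi]
    simp [Measure.count_singleton]
  -- compute the inner integrals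
  have hinner : ∀ (x : ∀ i, α i) (i : Fin n),
      (∫⁻ t, F (Function.update x i t) ∂(Measure.count : Measure (α i)))
        = ENNReal.ofReal (∑ t, p (Function.update x i t)) := by
    intro x i
    rw [MeasureTheory.lintegral_count, tsum_fintype,
      ENNReal.ofReal_sum_of_nonneg (fun t _ => hp0 _)]
  have houter : (∫⁻ x, F x ∂(Measure.pi (fun i => (Measure.count : Measure (α i))))) = 1 := by
    rw [MeasureTheory.lintegral_fintype]
    simp only [hpise, mul_one, hF]
    rw [← ENNReal.ofReal_sum_of_nonneg (fun x _ => hp0 x), hp1, ENNReal.ofReal_one]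
  rw [houter, ENNReal.one_rpow, MeasureTheory.lintegral_fintype] at H
  simp only [hpise, mul_one, hinner] at H
  -- now H : ∑ x, ∏ i, (ofReal (m_i x)) ^ (1/(#(Fin n) - 1)) ≤ 1
  have hexp : ((1:ℝ)/((Fintype.card (Fin n) : ℝ) - 1)) = (1:ℝ)/((n:ℝ)-1) := by
    rw [Fintype.card_fin]
  rw [hexp] at H
  have he0 : (0:ℝ) ≤ (1:ℝ)/((n:ℝ)-1) := by positivity
  have key : ∀ x : ∀ i, α i,
      (∏ i, (ENNReal.ofReal (∑ t, p (Function.update x i t))) ^ ((1:ℝ)/((n:ℝ)-1)))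
        = ENNReal.ofReal (∏ i, (∑ t, p (Function.update x i t)) ^ ((1:ℝ)/((n:ℝ)-1))) := by
    intro x
    calc ∏ i, (ENNReal.ofReal (∑ t, p (Function.update x i t))) ^ ((1:ℝ)/((n:ℝ)-1))
        = ∏ i, ENNReal.ofReal ((∑ t, p (Function.update x i t)) ^ ((1:ℝ)/((n:ℝ)-1))) := by
          refine Finset.prod_congr rfl fun i _ => ?_
          rw [ENNReal.ofReal_rpow_of_nonneg (Finset.sum_nonneg fun t _ => hp0 _) he0]
      _ = ENNReal.ofReal (∏ i, (∑ t, p (Function.update x i t)) ^ ((1:ℝ)/((n:ℝ)-1))) :=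
          (ENNReal.ofReal_prod_of_nonneg (fun i _ =>
            Real.rpow_nonneg (Finset.sum_nonneg fun t _ => hp0 _) _)).symm
  simp only [key] at H
  rw [← ENNReal.ofReal_sum_of_nonneg] at H
  · rwa [← ENNReal.ofReal_one, ENNReal.ofReal_le_ofReal_iff one_pos.le] at H
  · intro x _
    exact Finset.prod_nonneg fun i _ => Real.rpow_nonneg (Finset.sum_nonneg fun t _ => hp0 _) _

end hanAux

/-- Han's inequality: `(n-1)·H(X₁,…,Xₙ) ≤ Σᵢ H(X₁,…,X_{i-1},X_{i+1},…,Xₙ)`. -/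
theorem han_inequality {Ω : Type*} [Fintype Ω] {n : ℕ} (hn : 2 ≤ n)
    {α : Fin n → Type*} [∀ i, Fintype (α i)] [∀ i, DecidableEq (α i)]
    (μ : Ω → ℝ) (hnn : ∀ ω, 0 ≤ μ ω) (hsum : ∑ ω, μ ω = 1)
    (X : ∀ i, Ω → α i) :
    ((n : ℝ) - 1) * H2 μ (fun ω => fun i => X i ω) ≤
      ∑ i : Fin n, H2 μ (fun ω => fun j : {j : Fin n // j ≠ i} => X j ω) := by
  classical
  have h1n : (1:ℝ) < n := by exact_mod_cast lt_of_lt_of_le one_lt_two hn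
  set m : ℝ := (n:ℝ) - 1 with hm_def
  have hm : (0:ℝ) < m := by simp only [hm_def]; linarith
  set p : (∀ i, α i) → ℝ := prOf μ (fun ω => fun i => X i ω) with hp_def
  have hp0 : ∀ x, 0 ≤ p x := fun x => prOf_nonneg hnn _ x
  have hp1 : ∑ x, p x = 1 := by rw [hp_def, sum_prOf, hsum]
  -- the restriction maps and marginals
  let res : ∀ i : Fin n, (∀ k, α k) → (∀ j : {j : Fin n // j ≠ i}, α j) :=
    fun i x j => x j
  set q : ∀ i : Fin n, (∀ j : {j : Fin n // j ≠ i}, α j) → ℝ :=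
    fun i => prOf μ (fun ω => fun j : {j : Fin n // j ≠ i} => X j ω) with hq_def
  have hq_eq : ∀ (i : Fin n) b, q i b = ∑ x ∈ univ.filter (fun x => res i x = b), p x :=
    fun i b => prOf_comp μ (fun ω => fun k => X k ω) (res i) b
  have hq0 : ∀ i b, 0 ≤ q i b := fun i b => prOf_nonneg hnn _ b
  have hqp : ∀ (i : Fin n) x, p x ≤ q i (res i x) := by
    intro i x
    rw [hq_eq]
    refine Finset.single_le_sum (fun y _ => hp0 y) ?_
    simp
  have hmarg : ∀ (i : Fin n) (x : ∀ k, α k),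
      q i (res i x) = ∑ t : α i, p (Function.update x i t) := by
    intro i x
    rw [hq_eq]
    refine Finset.sum_nbij' (i := fun x' => x' i) (j := fun t => Function.update x i t)
      ?_ ?_ ?_ ?_ ?_
    · intro a ha; exact Finset.mem_univ _
    · intro t ht
      simp only [Finset.mem_filter, Finset.mem_univ, true_and]
      funext j
      exact Function.update_of_ne j.2 t x
    · intro a ha
      simp only [Finset.mem_filter, Finset.mem_univ, true_and] at ha
      funext k
      by_cases hk : k = i
      · subst hk; simp
      · simp only [Function.update_of_ne hk]
        exact (congrFun ha ⟨k, hk⟩).symm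
    · intro t ht
      simp
    · intro a ha
      simp only [Finset.mem_filter, Finset.mem_univ, true_and] at ha
      congr 1
      funext k
      by_cases hk : k = i
      · subst hk; simp
      · simp only [Function.update_of_ne hk]
        exact congrFun ha ⟨k, hk⟩
  -- Loomis–Whitney
  set g : (∀ i, α i) → ℝ := fun x => ∏ i, (q i (res i x)) ^ ((1:ℝ)/m) with hg_def
  have hg0 : ∀ x, 0 ≤ g x := fun x =>
    Finset.prod_nonneg fun i _ => Real.rpow_nonneg (hq0 _ _) _
  have hgsum : ∑ x, g x ≤ 1 := by
    have := LW hn p hp0 hp1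
    refine le_trans (le_of_eq ?_) this
    refine Finset.sum_congr rfl fun x _ => ?_
    refine Finset.prod_congr rfl fun i _ => ?_
    rw [hmarg]
  -- the core Gibbs-type estimate (natural log)
  have main : ∑ x, (p x * (∑ i, Real.log (q i (res i x))) - m * (p x * Real.log (p x))) ≤ 0 := by
    have hterm : ∀ x, p x * (∑ i, Real.log (q i (res i x))) - m * (p x * Real.log (p x))
        ≤ m * (g x - p x) := by
      intro x
      rcases eq_or_lt_of_le (hp0 x) with hpx | hpx
      · rw [← hpx]; simp only [zero_mul, mul_zero, sub_zero, zero_sub, neg_zero, sub_zero]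
        have : (0:ℝ) ≤ m * g x := mul_nonneg hm.le (hg0 x)
        linarith
      · have hqpos : ∀ i, 0 < q i (res i x) := fun i => lt_of_lt_of_le hpx (hqp i x)
        have hgpos : 0 < g x :=
          Finset.prod_pos fun i _ => Real.rpow_pos_of_pos (hqpos i) _
        have hlog : ∑ i, Real.log (q i (res i x)) = m * Real.log (g x) := by
          rw [hg_def]
          rw [Real.log_prod (fun i _ => (Real.rpow_pos_of_pos (hqpos i) _).ne')]
          rw [Finset.mul_sum]
          refine Finset.sum_congr rfl fun i _ => ?_
          rw [Real.log_rpow (hqpos i)]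
          field_simp
        rw [hlog]
        have hdiv : 0 < g x / p x := div_pos hgpos hpx
        have hle : Real.log (g x / p x) ≤ g x / p x - 1 := Real.log_le_sub_one_of_pos hdiv
        have h2 : p x * Real.log (g x / p x) ≤ g x - p x := by
          have := mul_le_mul_of_nonneg_left hle hpx.le
          have he : p x * (g x / p x - 1) = g x - p x := by field_simp
          linarith [he ▸ this]
        have h3 : Real.log (g x / p x) = Real.log (g x) - Real.log (p x) :=
          Real.log_div hgpos.ne' hpx.ne'
        calc p x * (m * Real.log (g x)) - m * (p x * Real.log (p x))
            = m * (p x * Real.log (g x / p x)) := by rw [h3]; ring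
          _ ≤ m * (g x - p x) := mul_le_mul_of_nonneg_left h2 hm.le
    calc ∑ x, (p x * (∑ i, Real.log (q i (res i x))) - m * (p x * Real.log (p x)))
        ≤ ∑ x, m * (g x - p x) := Finset.sum_le_sum fun x _ => hterm x
      _ = m * ((∑ x, g x) - 1) := by rw [← Finset.mul_sum, Finset.sum_sub_distrib, hp1]
      _ ≤ 0 := mul_nonpos_of_nonneg_of_nonpos hm.le (by linarith)
  -- rewrite the RHS entropies via fiber sums
  have hRHS : ∀ i : Fin n,
      H2 μ (fun ω => fun j : {j : Fin n // j ≠ i} => X j ω)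
        = ∑ x, -(p x * Real.logb 2 (q i (res i x))) := by
    intro i
    rw [H2]
    exact fiber_sum_mul p (res i) (q i) (hq_eq i) (Real.logb 2)
  have hlog2 : (0:ℝ) < Real.log 2 := Real.log_pos one_lt_two
  -- assemble
  rw [H2]
  calc ((n:ℝ) - 1) * ∑ x, -(p x * Real.logb 2 (p x))
      = ∑ x, -(m * (p x * Real.logb 2 (p x))) := by
        rw [Finset.mul_sum, hm_def]
        exact Finset.sum_congr rfl fun x _ => by ring
    _ ≤ ∑ x, ∑ i : Fin n, -(p x * Real.logb 2 (q i (res i x))) := by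
        rw [← sub_nonneg, ← Finset.sum_sub_distrib]
        have hrw : ∑ x, ((∑ i : Fin n, -(p x * Real.logb 2 (q i (res i x))))
            - -(m * (p x * Real.logb 2 (p x))))
            = (Real.log 2)⁻¹ * (-(∑ x, (p x * (∑ i, Real.log (q i (res i x)))
                - m * (p x * Real.log (p x))))) := by
          rw [← Finset.sum_neg_distrib, Finset.mul_sum]
          refine Finset.sum_congr rfl fun x _ => ?_
          simp only [Real.logb, div_eq_mul_inv]
          have e1 : ∑ i : Fin n, -(p x * (Real.log (q i (res i x)) * (Real.log 2)⁻¹))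
              = (∑ i : Fin n, Real.log (q i (res i x))) * (-(p x * (Real.log 2)⁻¹)) := by
            rw [Finset.sum_mul]
            exact Finset.sum_congr rfl fun i _ => by ring
          rw [e1]
          ring
        rw [hrw]
        have h0 : 0 ≤ -(∑ x, (p x * (∑ i, Real.log (q i (res i x))) - m * (p x * Real.log (p x)))) :=
          neg_nonneg.2 main
        exact mul_nonneg (by positivity) h0
    _ = ∑ i : Fin n, H2 μ (fun ω => fun j : {j : Fin n // j ≠ i} => X j ω) := by
        rw [Finset.sum_comm]
        exact (Finset.sum_congr rfl fun i _ => (hRHS i)).symm
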